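/- Let R be a real symmetric positive-definite n×n matrix and F a real n×n matrix with F + Fᵀ ⪰ 0. Then every eigenvalue λ ∈ ℂ of the matrix A = (R+F)^{-1}(R−F) satisfies |λ| ≤ 1. Consequently the autonomous iteration x^{n+1} = A x^n has bounded R-energy: (x^{n+1})ᵀ R x^{n+1} ≤ (x^n)ᵀ R x^n for all n. -/

import Mathlib

open Matrix

private lemma quad_re {n : ℕ} (M : Matrix (Fin n) (Fin n) ℝ) (v : Fin n → ℂ) :
    (star v ⬝ᵥ (M.map (fun r : ℝ => (r : ℂ))) *ᵥ v).re
      = (fun i => (v i).re) ⬝ᵥ M *ᵥ (fun i => (v i).re)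
        + (fun i => (v i).im) ⬝ᵥ M *ᵥ (fun i => (v i).im) := by
  simp only [dotProduct, mulVec, map_apply, Pi.star_apply, Complex.re_sum, Complex.mul_re,
    Complex.im_sum, Finset.mul_sum, RCLike.star_def, Complex.conj_re, Complex.conj_im,
    Complex.re_ofReal_mul, Complex.im_ofReal_mul, Complex.ofReal_re, Complex.ofReal_im,
    ← Finset.sum_add_distrib, neg_mul, sub_neg_eq_add]
  refine Finset.sum_congr rfl fun i _ => Finset.sum_congr rfl fun j _ => by ring

private lemma quad_im {n : ℕ} (M : Matrix (Fin n) (Fin n) ℝ) (v : Fin n → ℂ) :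
    (star v ⬝ᵥ (M.map (fun r : ℝ => (r : ℂ))) *ᵥ v).im
      = (fun i => (v i).re) ⬝ᵥ M *ᵥ (fun i => (v i).im)
        - (fun i => (v i).im) ⬝ᵥ M *ᵥ (fun i => (v i).re) := by
  simp only [dotProduct, mulVec, map_apply, Pi.star_apply, Complex.re_sum, Complex.mul_im,
    Complex.im_sum, Finset.mul_sum, RCLike.star_def, Complex.conj_re, Complex.conj_im,
    Complex.re_ofReal_mul, Complex.im_ofReal_mul, Complex.ofReal_re, Complex.ofReal_im,
    ← Finset.sum_sub_distrib, neg_mul]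
  refine Finset.sum_congr rfl fun i _ => Finset.sum_congr rfl fun j _ => by ring

private lemma dot_swap {n : ℕ} (M : Matrix (Fin n) (Fin n) ℝ) (x y : Fin n → ℝ) :
    x ⬝ᵥ M *ᵥ y = y ⬝ᵥ Mᵀ *ᵥ x := by
  rw [dotProduct_mulVec, ← mulVec_transpose, dotProduct_comm]

/-- Zero-input stability of the FDTD descriptor system: for `R = Rᵀ ≻ 0` and
`F + Fᵀ ⪰ 0`, every (complex) eigenvalue of `A = (R+F)⁻¹(R−F)` has modulus at most
one, and the iteration `x ↦ A x` does not increase the `R`-energy `xᵀ R x`. -/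
theorem stmt8 {n : ℕ}
    (R F : Matrix (Fin n) (Fin n) ℝ)
    (hR : R.PosDef) (hRsym : R = Rᵀ) (hF : (F + Fᵀ).PosSemidef)
    (A : Matrix (Fin n) (Fin n) ℝ) (hA : A = (R + F)⁻¹ * (R - F)) :
    (∀ (lam : ℂ) (v : Fin n → ℂ), v ≠ 0 →
        (A.map (fun r : ℝ => (r : ℂ))).mulVec v = lam • v → ‖lam‖ ≤ 1) ∧
      ∀ x : Fin n → ℝ, (A.mulVec x) ⬝ᵥ R.mulVec (A.mulVec x) ≤ x ⬝ᵥ R.mulVec x := by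
  -- basic quadratic-form facts over ℝ
  have hFnn : ∀ x : Fin n → ℝ, 0 ≤ x ⬝ᵥ F *ᵥ x := by
    intro x
    have h := hF.dotProduct_mulVec_nonneg x
    rw [star_trivial, add_mulVec, dotProduct_add, dot_swap Fᵀ x x, transpose_transpose] at h
    linarith
  have hRpos : ∀ x : Fin n → ℝ, x ≠ 0 → 0 < x ⬝ᵥ R *ᵥ x := by
    intro x hx
    have h := hR.dotProduct_mulVec_pos hx
    rwa [star_trivial] at h
  have hRnn : ∀ x : Fin n → ℝ, 0 ≤ x ⬝ᵥ R *ᵥ x := by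
    intro x
    by_cases hx : x = 0
    · simp [hx]
    · exact le_of_lt (hRpos x hx)
  -- invertibility of R + F
  have hdet : (R + F).det ≠ 0 := by
    intro h
    obtain ⟨v, hv, hveq⟩ := (Matrix.exists_mulVec_eq_zero_iff).mpr h
    have h0 : v ⬝ᵥ (R + F) *ᵥ v = 0 := by rw [hveq, dotProduct_zero]
    rw [add_mulVec, dotProduct_add] at h0
    have h1 := hRpos v hv
    have h2 := hFnn v
    linarith
  have hMul : (R + F) * A = R - F := by
    rw [hA, ← Matrix.mul_assoc, Matrix.mul_nonsing_inv _ (isUnit_iff_ne_zero.mpr hdet),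
      Matrix.one_mul]
  -- the key real energy estimate
  have key : ∀ x y : Fin n → ℝ, (R + F) *ᵥ y = (R - F) *ᵥ x →
      y ⬝ᵥ R *ᵥ y ≤ x ⬝ᵥ R *ᵥ x := by
    intro x y h
    have h1 : R *ᵥ (x - y) = F *ᵥ (x + y) := by
      rw [add_mulVec, sub_mulVec] at h
      funext i
      have h2 := congrFun h i
      simp only [Pi.add_apply, Pi.sub_apply, Matrix.mulVec_sub, Matrix.mulVec_add] at *
      linarith
    have h3 : (x + y) ⬝ᵥ R *ᵥ (x - y) = x ⬝ᵥ R *ᵥ x - y ⬝ᵥ R *ᵥ y := by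
      have hxy : x ⬝ᵥ R *ᵥ y = y ⬝ᵥ R *ᵥ x := by rw [dot_swap, ← hRsym]
      rw [Matrix.mulVec_sub, dotProduct_sub, add_dotProduct, add_dotProduct]
      linarith
    have h4 : 0 ≤ (x + y) ⬝ᵥ R *ᵥ (x - y) := by rw [h1]; exact hFnn (x + y)
    linarith
  constructor
  · -- eigenvalue bound
    intro lam v hv hev
    set a : Fin n → ℝ := fun i => (v i).re with ha
    set b : Fin n → ℝ := fun i => (v i).im with hb
    -- the complexified matrix identity
    have hMulC : ((R + F).map (fun r : ℝ => (r : ℂ))) * (A.map (fun r : ℝ => (r : ℂ)))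
        = (R - F).map (fun r : ℝ => (r : ℂ)) := by
      have : ((R + F) * A).map (Complex.ofRealHom : ℝ →+* ℂ)
          = ((R + F).map Complex.ofRealHom) * (A.map Complex.ofRealHom) :=
        Matrix.map_mul
      rw [hMul] at this
      exact this.symm
    set p : ℂ := star v ⬝ᵥ ((R + F).map (fun r : ℝ => (r : ℂ))) *ᵥ v with hp
    set q : ℂ := star v ⬝ᵥ ((R - F).map (fun r : ℝ => (r : ℂ))) *ᵥ v with hq
    have heq : q = lam * p := by
      rw [hq, ← hMulC, ← Matrix.mulVec_mulVec, hev, Matrix.mulVec_smul, dotProduct_smul,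
        smul_eq_mul, hp]
    -- components
    have hab : a ≠ 0 ∨ b ≠ 0 := by
      by_contra hc
      push_neg at hc
      apply hv
      funext i
      have h1 := congrFun hc.1 i
      have h2 := congrFun hc.2 i
      simp only [ha, hb, Pi.zero_apply] at h1 h2
      exact Complex.ext h1 h2
    have hρ : 0 < a ⬝ᵥ R *ᵥ a + b ⬝ᵥ R *ᵥ b := by
      rcases hab with h | h
      · have := hRpos a h; have := hRnn b; linarith
      · have := hRpos b h; have := hRnn a; linarith
    have hφ : 0 ≤ a ⬝ᵥ F *ᵥ a + b ⬝ᵥ F *ᵥ b := by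
      have := hFnn a; have := hFnn b; linarith
    have hν : a ⬝ᵥ R *ᵥ b - b ⬝ᵥ R *ᵥ a = 0 := by
      rw [dot_swap R a b, ← hRsym]; ring
    have hpre : p.re = (a ⬝ᵥ R *ᵥ a + b ⬝ᵥ R *ᵥ b) + (a ⬝ᵥ F *ᵥ a + b ⬝ᵥ F *ᵥ b) := by
      rw [hp, quad_re]
      simp only [add_mulVec, dotProduct_add]
      ring
    have hpim : p.im = (a ⬝ᵥ F *ᵥ b - b ⬝ᵥ F *ᵥ a) := by
      rw [hp, quad_im]
      simp only [add_mulVec, dotProduct_add]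
      linarith [hν]
    have hqre : q.re = (a ⬝ᵥ R *ᵥ a + b ⬝ᵥ R *ᵥ b) - (a ⬝ᵥ F *ᵥ a + b ⬝ᵥ F *ᵥ b) := by
      rw [hq, quad_re]
      simp only [sub_mulVec, dotProduct_sub]
      ring
    have hqim : q.im = -(a ⬝ᵥ F *ᵥ b - b ⬝ᵥ F *ᵥ a) := by
      rw [hq, quad_im]
      simp only [sub_mulVec, dotProduct_sub]
      linarith [hν]
    have hpne : p ≠ 0 := by
      intro h
      rw [h] at hpre
      simp only [Complex.zero_re] at hpre
      linarith
    have habs : ‖q‖ ≤ ‖p‖ := by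
      rw [Complex.norm_def, Complex.norm_def]
      apply Real.sqrt_le_sqrt
      rw [Complex.normSq_apply, Complex.normSq_apply, hpre, hpim, hqre, hqim]
      nlinarith [hρ, hφ]
    have hpabs : 0 < ‖p‖ := norm_pos_iff.mpr hpne
    rw [heq, norm_mul] at habs
    have h1 : ‖lam‖ * ‖p‖ ≤ 1 * ‖p‖ := by linarith
    exact le_of_mul_le_mul_right h1 hpabs
  · -- energy estimate
    intro x
    apply key x (A *ᵥ x)
    rw [Matrix.mulVec_mulVec, hMul]
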